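/- (Augmented Lagrangian dual: critical points have zero increment, one-dimensional instance.) Fix real parameters q, c, d, e, μ and a penalty parameter ν > 0. Define P^d_ν(τ, σ) = −c²/(2(q + (μ+τ)σ)) − (μ+τ)(½σ² + σd + e) − ½ντ² on the open set where q + (μ+τ)σ ≠ 0, and P^d(μ', σ) = −c²/(2(q + μ'σ)) − μ'(½σ² + σd + e). If (τ̄, σ̄) is a critical point of the function (μ', τ, σ) ↦ −c²/(2(q + (μ'+τ)σ)) − (μ'+τ)(½σ² + σd + e) − ½ντ² at (μ, τ̄, σ̄) (i.e. all three partial derivatives in μ', τ, σ vanish there, with q + (μ+τ̄)σ̄ ≠ 0), then τ̄ = 0 and the augmented dual and the canonical dual agree there: P^d_ν(0, σ̄) = P^d(μ, σ̄). Hence the penalty term is unnecessary: the augmented canonical dual and the canonical dual are equivalent at their stationary points. -/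

import Mathlib

/-- The augmented canonical dual function
`P^d_ν(μ', τ, σ) = −c²/(2(q + (μ'+τ)σ)) − (μ'+τ)(½σ² + σd + e) − ½ντ²`. -/
noncomputable def PdAug (q c d e ν : ℝ) (μ' τ σ : ℝ) : ℝ :=
  -(c ^ 2) / (2 * (q + (μ' + τ) * σ)) - (μ' + τ) * (σ ^ 2 / 2 + σ * d + e)
    - (1/2) * ν * τ ^ 2

/-- The canonical dual function
`P^d(μ, σ) = −c²/(2(q + μσ)) − μ(½σ² + σd + e)`. -/
noncomputable def Pd (q c d e : ℝ) (μ σ : ℝ) : ℝ :=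
  -(c ^ 2) / (2 * (q + μ * σ)) - μ * (σ ^ 2 / 2 + σ * d + e)

/-- Derivative of the rational-plus-linear part `s ↦ -(c^2)/(2*(q+s*σ)) - s*K`. -/
lemma hasDerivAt_core (q c σ K : ℝ) (s : ℝ) (h : q + s * σ ≠ 0) :
    HasDerivAt (fun s : ℝ => -(c ^ 2) / (2 * (q + s * σ)) - s * K)
      (-(-(c ^ 2) * (2 * σ)) / (2 * (q + s * σ)) ^ 2 - K) s := by
  have hv : HasDerivAt (fun s : ℝ => 2 * (q + s * σ)) (2 * σ) s := by
    have : HasDerivAt (fun s : ℝ => q + s * σ) σ s := by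
      simpa using (hasDerivAt_id s).mul_const σ |>.const_add q
    simpa [mul_comm] using this.const_mul 2
  have hu : HasDerivAt (fun _ : ℝ => -(c ^ 2)) 0 s := hasDerivAt_const _ _
  have hd := hu.div hv (by simpa using h)
  have hl : HasDerivAt (fun s : ℝ => s * K) K s := by
    simpa using (hasDerivAt_id s).mul_const K
  have := hd.sub hl
  refine this.congr_deriv ?_
  ring

/-- Augmented Lagrangian dual: critical points have zero
increment, one-dimensional instance: at any critical point `(μ, τ̄, σ̄)` of
the augmented canonical dual (all three partial derivatives vanish, with
`q + (μ+τ̄)σ̄ ≠ 0` and penalty parameter `ν > 0`), the increment variable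
vanishes, `τ̄ = 0`, and the augmented dual agrees with the canonical dual
there. -/
theorem augmented_dual_critical_tau_zero
    (q c d e μ ν : ℝ) (hν : 0 < ν) (τb σb : ℝ)
    (hG : q + (μ + τb) * σb ≠ 0)
    (hμ : deriv (fun μ' => PdAug q c d e ν μ' τb σb) μ = 0)
    (hτ : deriv (fun τ => PdAug q c d e ν μ τ σb) τb = 0)
    (hσ : deriv (fun σ => PdAug q c d e ν μ τb σ) σb = 0) :
    τb = 0 ∧ PdAug q c d e ν μ 0 σb = Pd q c d e μ σb := by
  set K : ℝ := σb ^ 2 / 2 + σb * d + e with hK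
  set D : ℝ := -(-(c ^ 2) * (2 * σb)) / (2 * (q + (μ + τb) * σb)) ^ 2 - K with hD
  -- derivative in μ'
  have h1 : HasDerivAt (fun μ' => PdAug q c d e ν μ' τb σb) D μ := by
    have hcore : HasDerivAt (fun s : ℝ => -(c ^ 2) / (2 * (q + s * σb)) - s * K) D
        (μ + τb) := hasDerivAt_core q c σb K (μ + τb) hG
    have hcomp := hcore.comp (h := fun μ' => μ' + τb) μ (by simpa using (hasDerivAt_id μ).add_const τb)
    have : HasDerivAt
        (fun μ' => -(c ^ 2) / (2 * (q + (μ' + τb) * σb)) - (μ' + τb) * K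
          - (1/2) * ν * τb ^ 2) D μ := by
      simpa [mul_one] using hcomp.sub_const ((1/2) * ν * τb ^ 2)
    simpa [PdAug, hK] using this
  -- derivative in τ
  have h2 : HasDerivAt (fun τ => PdAug q c d e ν μ τ σb) (D - ν * τb) τb := by
    have hcore : HasDerivAt (fun s : ℝ => -(c ^ 2) / (2 * (q + s * σb)) - s * K) D
        (μ + τb) := hasDerivAt_core q c σb K (μ + τb) hG
    have hcomp := hcore.comp τb (by simpa using (hasDerivAt_id τb).const_add μ)
    have hpen : HasDerivAt (fun τ : ℝ => (1/2) * ν * τ ^ 2) (ν * τb) τb := by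
      have := (hasDerivAt_pow 2 τb).const_mul ((1/2) * ν)
      refine this.congr_deriv ?_
      rw [show (2:ℕ) - 1 = 1 from rfl]; push_cast; ring
    have := (hcomp.sub hpen)
    exact this.congr_deriv (by ring)
  have e1 : D = 0 := by rw [← h1.deriv]; exact hμ
  have e2 : D - ν * τb = 0 := by rw [← h2.deriv]; exact hτ
  have hτ0 : τb = 0 := by
    have : ν * τb = 0 := by linarith
    exact (mul_eq_zero.mp this).resolve_left (ne_of_gt hν)
  refine ⟨hτ0, ?_⟩
  simp [PdAug, Pd]
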